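/- Let ℛ and 𝒮 be linear growing TRSs over 𝓕 and let 𝒟'(ℛ,𝒮) be the powerset-pair automaton built from 𝒞'_{RS_{𝒮°}}(ℛ). For every s ∈ 𝒯(𝓕): if s →_{Γ_{𝒟'}}* [S,P] and P ⊆ Q_f, then for every redex position p of s, s[(s|_p)°]_p ∈ (→_ℛ*)[RS_{𝒮°}], i.e., s[(s|_p)°]_p rewrites in ℛ to a root-stable term of 𝒮°. -/

import Mathlib

set_option maxHeartbeats 1000000

/-! ## Terms over a signature -/

/-- Terms over a signature given by a type `F` of function symbols together with
an arity function `ar`; variables are natural numbers. -/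
inductive Term (F : Type) (ar : F → ℕ) : Type
  | var : ℕ → Term F ar
  | app : (f : F) → (Fin (ar f) → Term F ar) → Term F ar

namespace Term

variable {F : Type} {ar : F → ℕ}

/-- The (finite) set of variables of a term. -/
def vars : Term F ar → Finset ℕ
  | var n => {n}
  | app _ ts => Finset.univ.biUnion fun i => (ts i).vars

/-- A term is ground if it contains no variables. -/
def Ground (t : Term F ar) : Prop := t.vars = ∅

/-- The number of occurrences of the variable `n` in a term. -/
def count (n : ℕ) : Term F ar → ℕ
  | var m => if m = n then 1 else 0
  | app _ ts => ∑ i, (ts i).count n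

/-- A term is linear if no variable occurs twice in it. -/
def Linear (t : Term F ar) : Prop := ∀ n, t.count n ≤ 1

/-- Applying a substitution to a term. -/
def subst (σ : ℕ → Term F ar) : Term F ar → Term F ar
  | var n => σ n
  | app f ts => app f fun i => (ts i).subst σ

/-- The subterm at a position (a list of argument indices), if the position is valid. -/
def subtermAt : Term F ar → List ℕ → Option (Term F ar)
  | t, [] => some t
  | var _, _ :: _ => none
  | app f ts, i :: p => if h : i < ar f then (ts ⟨i, h⟩).subtermAt p else none

/-- Replacing the subterm at a position, if the position is valid. -/
def replaceAt : Term F ar → List ℕ → Term F ar → Option (Term F ar)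
  | _, [], u => some u
  | var _, _ :: _, _ => none
  | app f ts, i :: p, u =>
      if h : i < ar f then
        ((ts ⟨i, h⟩).replaceAt p u).map fun s => app f (Function.update ts ⟨i, h⟩ s)
      else none

/-- `s.IsSubtermOf t` : `s` is a subterm of `t`. -/
def IsSubtermOf (s t : Term F ar) : Prop := ∃ p, t.subtermAt p = some s

/-- Relabelling of function symbols along an arity-preserving map of signatures. -/
def relabel {G : Type} {arG : G → ℕ} (φ : F → G) (h : ∀ f, arG (φ f) = ar f) :
    Term F ar → Term G arG
  | var n => var n
  | app f ts => app (φ f) fun i => (ts (Fin.cast (h f) i)).relabel φ h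

end Term

/-! ## Rewriting -/

/-- One-step rewriting with a set of rewrite rules: there are a position `p` of `s`,
a rule `(l, r)` and a substitution `σ` with `s|_p = lσ` and `t = s[rσ]_p`. -/
def Rewrites {F : Type} {ar : F → ℕ} (R : Set (Term F ar × Term F ar))
    (s t : Term F ar) : Prop :=
  ∃ (p : List ℕ) (l r : Term F ar) (σ : ℕ → Term F ar),
    (l, r) ∈ R ∧ s.subtermAt p = some (l.subst σ) ∧ s.replaceAt p (r.subst σ) = some t

/-- Many-step rewriting (reflexive–transitive closure). -/
abbrev RewritesStar {F : Type} {ar : F → ℕ} (R : Set (Term F ar × Term F ar)) :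
    Term F ar → Term F ar → Prop :=
  Relation.ReflTransGen (Rewrites R)

/-- A term rewriting system: a finite set of rules whose left-hand sides are not variables. -/
structure TRS (F : Type) (ar : F → ℕ) where
  rules : Set (Term F ar × Term F ar)
  finite : rules.Finite
  lhs_not_var : ∀ lr ∈ rules, ∀ n, lr.1 ≠ Term.var n

namespace TRS

variable {F : Type} {ar : F → ℕ}

def LeftLinear (R : TRS F ar) : Prop := ∀ lr ∈ R.rules, lr.1.Linear

def RightLinear (R : TRS F ar) : Prop := ∀ lr ∈ R.rules, lr.2.Linear

/-- A TRS is linear if all left- and right-hand sides are linear terms. -/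
def IsLinear (R : TRS F ar) : Prop := R.LeftLinear ∧ R.RightLinear

/-- A TRS is growing if every variable occurring both in the left- and the right-hand
side of a rule occurs at depth 1 in the left-hand side. -/
def Growing (R : TRS F ar) : Prop :=
  ∀ lr ∈ R.rules, ∀ n ∈ lr.1.vars, n ∈ lr.2.vars →
    ∀ (f : F) (ts : Fin (ar f) → Term F ar), lr.1 = Term.app f ts →
      ∀ i, n ∈ (ts i).vars → ts i = Term.var n

/-- A redex is an instance of a left-hand side. -/
def IsRedex (R : TRS F ar) (s : Term F ar) : Prop :=
  ∃ lr ∈ R.rules, ∃ σ : ℕ → Term F ar, s = lr.1.subst σ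

/-- `p` is a redex position of `s`. -/
def RedexPos (R : TRS F ar) (s : Term F ar) (p : List ℕ) : Prop :=
  ∃ u, s.subtermAt p = some u ∧ R.IsRedex u

def Reducible (R : TRS F ar) (s : Term F ar) : Prop := ∃ p, R.RedexPos s p

/-- A term is root-stable if it cannot be rewritten to a redex. -/
def RootStable (R : TRS F ar) (s : Term F ar) : Prop :=
  ¬ ∃ t, RewritesStar R.rules s t ∧ R.IsRedex t

/-- Ground normal forms. -/
def NFset (R : TRS F ar) : Set (Term F ar) := { t | t.Ground ∧ ¬ R.Reducible t }

/-- Ground redexes. -/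
def RedexSet (R : TRS F ar) : Set (Term F ar) := { t | t.Ground ∧ R.IsRedex t }

/-- Root-stable ground terms. -/
def RSset (R : TRS F ar) : Set (Term F ar) := { t | t.Ground ∧ R.RootStable t }

/-- Relabelling a TRS along an arity-preserving map of signatures. -/
def relabel {G : Type} {arG : G → ℕ} (R : TRS F ar) (φ : F → G)
    (h : ∀ f, arG (φ f) = ar f) : TRS G arG where
  rules := (fun lr => (lr.1.relabel φ h, lr.2.relabel φ h)) '' R.rules
  finite := R.finite.image _
  lhs_not_var := by
    rintro lr ⟨lr0, h0, rfl⟩ n hn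
    dsimp only at hn
    cases h1 : lr0.1 with
    | var m => exact absurd h1 (R.lhs_not_var lr0 h0 m)
    | app f ts =>
        rw [h1] at hn
        simp only [Term.relabel] at hn
        nomatch hn

end TRS

/-! ## Tree automata -/

/-- A transition rule `f(q₁,…,qₙ) → q` of a bottom-up tree automaton. -/
abbrev TARule (F : Type) (ar : F → ℕ) (Q : Type) : Type :=
  (f : F) × ((Fin (ar f) → Q) × Q)

/-- A (finite bottom-up) tree automaton without ε-transitions. -/
structure TreeAutomaton (F : Type) (ar : F → ℕ) (Q : Type) where
  trans : Set (TARule F ar Q)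
  final : Set Q

/-- `Reaches Δ t q` : the ground term `t` rewrites to the state `q` using the
transition rules `Δ`. -/
inductive Reaches {F : Type} {ar : F → ℕ} {Q : Type} (Δ : Set (TARule F ar Q)) :
    Term F ar → Q → Prop
  | app {f : F} {ts : Fin (ar f) → Term F ar} {qs : Fin (ar f) → Q} {q : Q} :
      (∀ i, Reaches Δ (ts i) (qs i)) → (⟨f, qs, q⟩ : TARule F ar Q) ∈ Δ →
      Reaches Δ (Term.app f ts) q

/-- `ReachesT Δ θ t q` : the term `t`, whose variables are interpreted as the states
given by `θ`, rewrites to the state `q` using the transition rules `Δ`. -/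
inductive ReachesT {F : Type} {ar : F → ℕ} {Q : Type} (Δ : Set (TARule F ar Q))
    (θ : ℕ → Q) : Term F ar → Q → Prop
  | var (n : ℕ) : ReachesT Δ θ (Term.var n) (θ n)
  | app {f : F} {ts : Fin (ar f) → Term F ar} {qs : Fin (ar f) → Q} {q : Q} :
      (∀ i, ReachesT Δ θ (ts i) (qs i)) → (⟨f, qs, q⟩ : TARule F ar Q) ∈ Δ →
      ReachesT Δ θ (Term.app f ts) q

/-- The language of a tree automaton: all ground terms reaching a final state. -/
def Lang {F : Type} {ar : F → ℕ} {Q : Type} (A : TreeAutomaton F ar Q) :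
    Set (Term F ar) :=
  { t | t.Ground ∧ ∃ q ∈ A.final, Reaches A.trans t q }

/-- A set of ground terms is recognizable if it is the language of some finite
tree automaton. -/
def Recognizable {F : Type} {ar : F → ℕ} (T : Set (Term F ar)) : Prop :=
  ∃ (Q : Type) (_ : Fintype Q) (A : TreeAutomaton F ar Q), T = Lang A

/-- The set of states occurring in a set of transition rules. -/
def statesOf {F : Type} {ar : F → ℕ} {Q : Type} (Γ : Set (TARule F ar Q)) : Set Q :=
  { q | ∃ ρ ∈ Γ, ρ.2.2 = q ∨ ∃ i, ρ.2.1 i = q }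

/-! ## The automaton `ℬ(ℛ)` -/

/-- The canonical representative of the state `⟨t⟩` of `ℬ(ℛ)`: all variables are
identified with the single state `⟨x⟩`, represented by `var 0`. -/
def stPattern {F : Type} {ar : F → ℕ} : Term F ar → Term F ar
  | Term.var _ => Term.var 0
  | Term.app f ts => Term.app f ts

/-- `S_ℛ`: the set of all subterms of arguments of left-hand sides of `ℛ`. -/
def SR {F : Type} {ar : F → ℕ} (R : TRS F ar) : Set (Term F ar) :=
  { s | ∃ lr ∈ R.rules, ∃ (f : F) (ts : Fin (ar f) → Term F ar),
        lr.1 = Term.app f ts ∧ ∃ i, s.IsSubtermOf (ts i) }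

/-- The representatives of the states of `ℬ(ℛ)`: the patterns of terms of `S_ℛ`,
together with `⟨x⟩`. -/
def BStateSet {F : Type} {ar : F → ℕ} (R : TRS F ar) : Set (Term F ar) :=
  stPattern '' SR R ∪ {Term.var 0}

/-- The matching rules of `ℬ(ℛ)` (with states encoded by `enc`):
`f(⟨t₁⟩,…,⟨tₙ⟩) → ⟨t⟩` for every `t = f(t₁,…,tₙ) ∈ S_ℛ`. -/
def BMatch {F : Type} {ar : F → ℕ} {Q : Type} (R : TRS F ar) (enc : Term F ar → Q) :
    Set (TARule F ar Q) :=
  { ρ | ∃ (f : F) (ts : Fin (ar f) → Term F ar), Term.app f ts ∈ SR R ∧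
        ρ = ⟨f, fun i => enc (stPattern (ts i)), enc (Term.app f ts)⟩ }

/-- The propagation rules `f(⟨x⟩,…,⟨x⟩) → ⟨x⟩` for every function symbol `f`. -/
def BProp {F : Type} {ar : F → ℕ} {Q : Type} (enc : Term F ar → Q) :
    Set (TARule F ar Q) :=
  { ρ | ∃ f : F, ρ = ⟨f, fun _ => enc (Term.var 0), enc (Term.var 0)⟩ }

/-- The transition rules of the automaton `ℬ(ℛ)`. -/
def BTrans {F : Type} {ar : F → ℕ} {Q : Type} (R : TRS F ar) (enc : Term F ar → Q) :
    Set (TARule F ar Q) :=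
  BMatch R enc ∪ BProp enc

/-- `Σ(t)`: the set of ground instances of the term `t`. -/
def GInst {F : Type} {ar : F → ℕ} (t : Term F ar) : Set (Term F ar) :=
  { s | s.Ground ∧ ∃ σ, s = t.subst σ }

/-! ## Saturation -/

/-- The state `qᵢ` associated to the argument `lᵢ` of a left-hand side in the
saturation rule: `lᵢθ` if `lᵢ` is a variable occurring in `r` (whose variable set
is `rv`), and `⟨lᵢ⟩` otherwise. -/
def satArg {F : Type} {ar : F → ℕ} {Q : Type} (enc : Term F ar → Q) (θ : ℕ → Q)
    (rv : Finset ℕ) : Term F ar → Q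
  | Term.var n => if n ∈ rv then θ n else enc (Term.var 0)
  | Term.app f ts => enc (Term.app f ts)

/-- One step of the saturation process: add all transition rules `f(q₁,…,qₙ) → q`
obtained from a rewrite rule `f(l₁,…,lₙ) → r` and a state substitution `θ`
(with values among the states `Qc` of the automaton) such that `rθ →_Γ* q`. -/
def satStep {F : Type} {ar : F → ℕ} {Q : Type} (R : TRS F ar) (enc : Term F ar → Q)
    (Qc : Set Q) (Γ : Set (TARule F ar Q)) : Set (TARule F ar Q) :=
  Γ ∪ { ρ | ∃ (f : F) (ls : Fin (ar f) → Term F ar) (r : Term F ar) (θ : ℕ → Q) (q : Q),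
        (Term.app f ls, r) ∈ R.rules ∧ (∀ n ∈ r.vars, θ n ∈ Qc) ∧ ReachesT Γ θ r q ∧
        ρ = ⟨f, fun i => satArg enc θ r.vars (ls i), q⟩ }

/-- The saturated set of transition rules: the closure of `Γ0` under the saturation
inference rule. -/
def satGamma {F : Type} {ar : F → ℕ} {Q : Type} (R : TRS F ar) (enc : Term F ar → Q)
    (Qc : Set Q) (Γ0 : Set (TARule F ar Q)) : Set (TARule F ar Q) :=
  ⋃ n, (satStep R enc Qc)^[n] Γ0

/-! ## The automaton `𝒞_T(ℛ)` and its extension `𝒞'_T(ℛ)` -/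

/-- The data of the construction of the automaton `𝒞_T(ℛ)`: an automaton `𝒜_T`
recognizing `T` with all states accessible and state set `QA`, together with an
encoding `enc` of the states `⟨t⟩` of `ℬ(ℛ)` into the common state type `Q`, such
that every state common to `𝒜_T` and `ℬ(ℛ)` accepts the same set of terms in both
automata. -/
structure CSetup {G : Type} [Fintype G] {arG : G → ℕ} (Q : Type) [Fintype Q]
    (Rg : TRS G arG) (T : Set (Term G arG)) where
  enc : Term G arG → Q
  A : TreeAutomaton G arG Q
  QA : Set Q
  henc : Set.InjOn enc (BStateSet Rg)
  hAstates : ∀ ρ ∈ A.trans, ρ.2.2 ∈ QA ∧ ∀ i, ρ.2.1 i ∈ QA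
  hfinal : A.final ⊆ QA
  hacc : ∀ q ∈ QA, ∃ s : Term G arG, s.Ground ∧ Reaches A.trans s q
  hground : ∃ s : Term G arG, s.Ground
  hshared : ∀ q ∈ QA ∩ enc '' BStateSet Rg, ∀ s : Term G arG,
      Reaches A.trans s q ↔ Reaches (BTrans Rg enc) s q
  hT : T = Lang A

namespace CSetup

variable {G : Type} [Fintype G] {arG : G → ℕ} {Q : Type} [Fintype Q]
  {Rg : TRS G arG} {T : Set (Term G arG)}

/-- The set of states of the automaton `𝒞_T(ℛ)`. -/
def Qstates (C : CSetup Q Rg T) : Set Q := C.QA ∪ C.enc '' BStateSet Rg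

/-- The transition rules of `𝒞_T(ℛ)` before saturation: the union of `𝒜_T` and `ℬ(ℛ)`. -/
def Γ0 (C : CSetup Q Rg T) : Set (TARule G arG Q) := C.A.trans ∪ BTrans Rg C.enc

/-- The transition rules of `𝒞_T(ℛ)` after saturation. -/
def Γsat (C : CSetup Q Rg T) : Set (TARule G arG Q) :=
  satGamma Rg C.enc C.Qstates C.Γ0

end CSetup

/-- The redex rules `f(⟪l₁⟫,…,⟪lₙ⟫) → q_r` for every left-hand side `f(l₁,…,lₙ)`. -/
def RedexRules {F : Type} {ar : F → ℕ} {Q : Type} (R : TRS F ar)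
    (enc2 : Term F ar → Q) (qr : Q) : Set (TARule F ar Q) :=
  { ρ | ∃ (f : F) (ls : Fin (ar f) → Term F ar) (r : Term F ar),
        (Term.app f ls, r) ∈ R.rules ∧
        ρ = ⟨f, fun i => enc2 (stPattern (ls i)), qr⟩ }

/-- The rules `f(⟨x⟩,…,q_r,…,⟨x⟩) → q_r`. -/
def QrProp {F : Type} {ar : F → ℕ} {Q : Type} (enc : Term F ar → Q) (qr : Q) :
    Set (TARule F ar Q) :=
  { ρ | ∃ (f : F) (j : Fin (ar f)),
        ρ = ⟨f, fun i => if i = j then qr else enc (Term.var 0), qr⟩ }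

/-- The data of the construction of the automaton `𝒞'_T(ℛ)`: `𝒞_T(ℛ)` extended with
a fresh copy `⟪t⟫` (encoded by `enc2`, with `⟪x⟫ = ⟨x⟩`) of the states of `ℬ(ℛ)` and
a fresh state `q_r`. -/
structure CpSetup {G : Type} [Fintype G] {arG : G → ℕ} (Q : Type) [Fintype Q]
    (Rg : TRS G arG) (T : Set (Term G arG)) extends CSetup Q Rg T where
  enc2 : Term G arG → Q
  qr : Q
  henc2 : Set.InjOn enc2 (BStateSet Rg)
  hx : enc2 (Term.var 0) = enc (Term.var 0)
  hfresh : (enc2 '' (BStateSet Rg \ {Term.var 0}) ∪ {qr}) ∩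
              (QA ∪ enc '' BStateSet Rg) = ∅
  hqr : qr ∉ enc2 '' (BStateSet Rg \ {Term.var 0})

namespace CpSetup

variable {G : Type} [Fintype G] {arG : G → ℕ} {Q : Type} [Fintype Q]
  {Rg : TRS G arG} {T : Set (Term G arG)}

/-- The transition rules `Γ'` of the automaton `𝒞'_T(ℛ)`. -/
def Γ' (C : CpSetup Q Rg T) : Set (TARule G arG Q) :=
  C.toCSetup.Γsat ∪ BMatch Rg C.enc2 ∪ RedexRules Rg C.enc2 C.qr ∪ QrProp C.enc C.qr

end CpSetup

/-! ## The signature `𝓖 = 𝓕 ∪ {•}` -/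

/-- The arity function of the extended signature `𝓕 ∪ {•}` (with `•` the fresh
constant `none`). -/
def arB {F : Type} (ar : F → ℕ) : Option F → ℕ
  | none => 0
  | some f => ar f

/-- The term `•`. -/
def bulletTm {F : Type} {ar : F → ℕ} : Term (Option F) (arB ar) :=
  Term.app none Fin.elim0

/-- The embedding of `𝒯(𝓕)`-terms into terms over `𝓕 ∪ {•}`. -/
def liftB {F : Type} {ar : F → ℕ} : Term F ar → Term (Option F) (arB ar) :=
  Term.relabel some (fun _ => rfl)

/-- A TRS over `𝓕` viewed as a TRS over `𝓕 ∪ {•}`. -/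
def TRS.liftB {F : Type} {ar : F → ℕ} (R : TRS F ar) : TRS (Option F) (arB ar) :=
  R.relabel some (fun _ => rfl)

/-- The TRS `ℛ• = ℛ ∪ {• → •}` over the signature `𝓕 ∪ {•}`. -/
def TRS.bullet {F : Type} {ar : F → ℕ} (R : TRS F ar) : TRS (Option F) (arB ar) where
  rules := R.liftB.rules ∪ {(bulletTm, bulletTm)}
  finite := R.liftB.finite.union (Set.finite_singleton _)
  lhs_not_var := by
    rintro lr (h | h) n hn
    · exact R.liftB.lhs_not_var lr h n hn
    · rw [Set.mem_singleton_iff] at h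
      rw [h] at hn
      simp [bulletTm] at hn

/-! ## The automaton `𝒟(ℛ)` -/

/-- For a symbol `g` and sets of states `Ss` for the arguments, the set
`g(S₁,…,Sₙ)↓` of states reachable from `g` applied to states chosen from the `Ssᵢ`. -/
def oneStep {G : Type} {arG : G → ℕ} {Q : Type} (Γ : Set (TARule G arG Q)) (g : G)
    (Ss : Fin (arG g) → Set Q) : Set Q :=
  { q | ∃ qs : Fin (arG g) → Q, (∀ i, qs i ∈ Ss i) ∧ (⟨g, qs, q⟩ : TARule G arG Q) ∈ Γ }

/-- `t↓` for a ground term `t`: the set of states reachable from `t`. -/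
def dn {G : Type} {arG : G → ℕ} {Q : Type} (Γ : Set (TARule G arG Q))
    (t : Term G arG) : Set Q :=
  { q | Reaches Γ t q }

/-- There is a rewrite rule with left-hand side `g(l₁,…,lₙ)` such that
`⟪lᵢ⟫ ∈ Ssᵢ` for all `i`. -/
def LhsMatch {G : Type} {arG : G → ℕ} {Q : Type} (Rg : TRS G arG)
    (enc2 : Term G arG → Q) (g : G) (Ss : Fin (arG g) → Set Q) : Prop :=
  ∃ (ls : Fin (arG g) → Term G arG) (r : Term G arG),
    (Term.app g ls, r) ∈ Rg.rules ∧ ∀ i, enc2 (stPattern (ls i)) ∈ Ss i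

/-- The transition rules of the automaton `𝒟(ℛ)` over `𝓕`, built from the transition
rules `Γ'` of `𝒞'_{NF}(ℛ)` over `𝓕 ∪ {•}`. -/
def DTrans {F : Type} {ar : F → ℕ} {Q : Type} (Rb : TRS (Option F) (arB ar))
    (Γ' : Set (TARule (Option F) (arB ar) Q))
    (enc enc2 : Term (Option F) (arB ar) → Q) :
    Set (TARule F ar (Set Q × Set Q)) :=
  { ρ | ∃ (f : F) (SP : Fin (ar f) → Set Q × Set Q) (P1 P2 : Set Q),
      P1 ⊆ (⋃ i : Fin (ar f), oneStep Γ' (some f)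
              (fun j => @ite _ (j = i) (instDecidableEqFin (ar f) j i) (SP j).2 (SP j).1)) ∧
      (∀ (i : Fin (ar f)), ∀ q ∈ (SP i).2,
        (P1 ∩ oneStep Γ' (some f) (fun j => @ite _ (j = i) (instDecidableEqFin (ar f) j i) {q} (SP j).1)).Nonempty) ∧
      ((LhsMatch Rb enc2 (some f) (fun i => (SP i).1) ∧ P2 = {enc (Term.var 0)}) ∨
       (¬ LhsMatch Rb enc2 (some f) (fun i => (SP i).1) ∧ P2 = (∅ : Set Q))) ∧
      ρ = ⟨f, SP, (oneStep Γ' (some f) (fun i => (SP i).1), P1 ∪ P2)⟩ }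

/-- The automaton `𝒟(ℛ)`: final states are the pairs `[S,P]` with `q_r ∈ S` and
`P ⊆ Q_f`. -/
def DAutomaton {F : Type} {ar : F → ℕ} {Q : Type} (Rb : TRS (Option F) (arB ar))
    (Γ' : Set (TARule (Option F) (arB ar) Q))
    (enc enc2 : Term (Option F) (arB ar) → Q) (qr : Q) (Qf : Set Q) :
    TreeAutomaton F ar (Set Q × Set Q) where
  trans := DTrans Rb Γ' enc enc2
  final := { SP | qr ∈ SP.1 ∧ SP.2 ⊆ Qf }

/-! ## Growing approximations -/

/-- `VarRepl t t'` : `t'` is obtained from `t` by replacing occurrences of variables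
by (possibly other) variables. -/
inductive VarRepl {F : Type} {ar : F → ℕ} : Term F ar → Term F ar → Prop
  | var (n m : ℕ) : VarRepl (Term.var n) (Term.var m)
  | app (f : F) (ts ts' : Fin (ar f) → Term F ar) :
      (∀ i, VarRepl (ts i) (ts' i)) → VarRepl (Term.app f ts) (Term.app f ts')

/-- `Rg` is a growing approximation of `R`: a right-linear growing TRS obtained from
`R` by replacing, in each right-hand side, occurrences of variables by variables not
occurring in the corresponding left-hand side. -/
def IsGrowingApprox {F : Type} {ar : F → ℕ} (R Rg : TRS F ar) : Prop :=
  Rg.RightLinear ∧ Rg.Growing ∧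
  (∀ lr ∈ Rg.rules, ∃ lr' ∈ R.rules, lr.1 = lr'.1 ∧ VarRepl lr'.2 lr.2 ∧
      ∀ n ∈ lr.2.vars, n ∉ lr.1.vars) ∧
  (∀ lr ∈ R.rules, ∃ lr' ∈ Rg.rules, lr.1 = lr'.1 ∧ VarRepl lr.2 lr'.2 ∧
      ∀ n ∈ lr'.2.vars, n ∉ lr'.1.vars)

/-! ## The signature `𝓖 = 𝓕 ∪ {f° : f ∈ 𝓕}` -/

/-- The arity function of the signature `𝓕 ∪ {f° : f ∈ 𝓕}` (`inl f` is `f`,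
`inr f` is `f°`). -/
def arC {F : Type} (ar : F → ℕ) : F ⊕ F → ℕ
  | Sum.inl f => ar f
  | Sum.inr f => ar f

/-- The embedding of `𝒯(𝓕)`-terms into terms over `𝓕 ∪ {f° : f ∈ 𝓕}`. -/
def liftC {F : Type} {ar : F → ℕ} : Term F ar → Term (F ⊕ F) (arC ar) :=
  Term.relabel Sum.inl (fun _ => rfl)

/-- `t°`: mark the root symbol of `t`. -/
def circTm {F : Type} {ar : F → ℕ} : Term F ar → Term (F ⊕ F) (arC ar)
  | Term.var n => Term.var n
  | Term.app f ts => Term.app (Sum.inr f) fun i => liftC (ts i)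

/-- A TRS over `𝓕` viewed as a TRS over `𝓕 ∪ {f° : f ∈ 𝓕}`. -/
def TRS.liftC {F : Type} {ar : F → ℕ} (R : TRS F ar) : TRS (F ⊕ F) (arC ar) :=
  R.relabel Sum.inl (fun _ => rfl)

/-- The TRS `𝒮° = 𝒮 ∪ {l° → r | l → r ∈ 𝒮}` over the signature `𝓕 ∪ {f° : f ∈ 𝓕}`. -/
def TRS.circ {F : Type} {ar : F → ℕ} (S : TRS F ar) : TRS (F ⊕ F) (arC ar) where
  rules := S.liftC.rules ∪ (fun lr => (circTm lr.1, _root_.liftC lr.2)) '' S.rules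
  finite := S.liftC.finite.union (S.finite.image _)
  lhs_not_var := by
    rintro lr (h | ⟨lr0, h0, rfl⟩) n hn
    · exact S.liftC.lhs_not_var lr h n hn
    · dsimp only at hn
      cases h1 : lr0.1 with
      | var m => exact absurd h1 (S.lhs_not_var lr0 h0 m)
      | app f ts =>
          rw [h1] at hn
          simp only [circTm] at hn
          nomatch hn

/-- The transitions added to `ℬ(𝒮°)` to obtain `𝒜_{REDEX_{𝒮°}}`:
`f(⟨l₁⟩,…,⟨lₙ⟩) → q_f` and `f°(⟨l₁⟩,…,⟨lₙ⟩) → q_f` for each left-hand side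
`f(l₁,…,lₙ)` of a rule of `𝒮`. -/
def CircRedexRules {F : Type} {ar : F → ℕ} {Q : Type} (S : TRS F ar)
    (enc : Term (F ⊕ F) (arC ar) → Q) (qf : Q) : Set (TARule (F ⊕ F) (arC ar) Q) :=
  { ρ | ∃ (f : F) (ls : Fin (ar f) → Term F ar) (r : Term F ar),
      (Term.app f ls, r) ∈ S.rules ∧
      (ρ = ⟨Sum.inl f, fun i => enc (stPattern (liftC (ls i))), qf⟩ ∨
       ρ = ⟨Sum.inr f, fun i => enc (stPattern (liftC (ls i))), qf⟩) }

/-! ## The automaton `𝒟'(ℛ,𝒮)` -/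

/-- The data of the construction of `𝒞'_{RS_{𝒮°}}(ℛ)`: the saturated automaton
`𝒞_{RS_{𝒮°}}(ℛ)`, a fresh copy `⟪t⟫` (encoded by `enc2`, with `⟪x⟫ = ⟨x⟩`) of the
states of `ℬ(ℛ)`, and an automaton `𝒞_{REDEX_𝒮}(𝒮)` (transitions `Etrans`, final
states `Qf'`) recognizing the non-`𝒮`-root-stable ground terms of `𝒯(𝓕)`. -/
structure CrsSetup {F : Type} [Fintype F] {ar : F → ℕ} (Q : Type) [Fintype Q]
    (R S : TRS F ar) extends CSetup Q R.liftC (TRS.RSset S.circ) where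
  enc2 : Term (F ⊕ F) (arC ar) → Q
  henc2 : Set.InjOn enc2 (BStateSet R.liftC)
  hx : enc2 (Term.var 0) = enc (Term.var 0)
  hfresh2 : (enc2 '' (BStateSet R.liftC \ {Term.var 0})) ∩
              (QA ∪ enc '' BStateSet R.liftC) = ∅
  Etrans : Set (TARule (F ⊕ F) (arC ar) Q)
  Qf' : Set Q
  hQf' : Qf' ⊆ statesOf Etrans
  hEfresh : statesOf Etrans ∩
      (QA ∪ enc '' BStateSet R.liftC ∪ enc2 '' (BStateSet R.liftC \ {Term.var 0})) = ∅
  hE : ∀ t : Term (F ⊕ F) (arC ar),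
      (t.Ground ∧ ∃ q ∈ Qf', Reaches Etrans t q) ↔
      (∃ s : Term F ar, t = liftC s ∧ s.Ground ∧ ¬ S.RootStable s)

namespace CrsSetup

variable {F : Type} [Fintype F] {ar : F → ℕ} {Q : Type} [Fintype Q] {R S : TRS F ar}

/-- The transition rules `Γ'` of the automaton `𝒞'_{RS_{𝒮°}}(ℛ)`. -/
def Γ' (C : CrsSetup Q R S) : Set (TARule (F ⊕ F) (arC ar) Q) :=
  C.toCSetup.Γsat ∪ BMatch R.liftC C.enc2 ∪ C.Etrans

end CrsSetup

/-- The transition rules of the automaton `𝒟'(ℛ,𝒮)` over `𝓕`, built from the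
transition rules `Γ'` of `𝒞'_{RS_{𝒮°}}(ℛ)`. -/
def DTransRS {F : Type} {ar : F → ℕ} {Q : Type} (Rg : TRS (F ⊕ F) (arC ar))
    (Γ' : Set (TARule (F ⊕ F) (arC ar) Q)) (enc2 : Term (F ⊕ F) (arC ar) → Q) :
    Set (TARule F ar (Set Q × Set Q)) :=
  { ρ | ∃ (f : F) (SP : Fin (ar f) → Set Q × Set Q) (P1 P2 : Set Q),
      P1 ⊆ (⋃ i : Fin (ar f), oneStep Γ' (Sum.inl f)
              (fun j => @ite _ (j = i) (instDecidableEqFin (ar f) j i) (SP j).2 (SP j).1)) ∧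
      (∀ (i : Fin (ar f)), ∀ q ∈ (SP i).2,
        (P1 ∩ oneStep Γ' (Sum.inl f) (fun j => @ite _ (j = i) (instDecidableEqFin (ar f) j i) {q} (SP j).1)).Nonempty) ∧
      ((LhsMatch Rg enc2 (Sum.inl f) (fun i => (SP i).1) ∧ P2.Nonempty ∧
          P2 ⊆ oneStep Γ' (Sum.inr f) (fun i => (SP i).1)) ∨
       (¬ LhsMatch Rg enc2 (Sum.inl f) (fun i => (SP i).1) ∧ P2 = (∅ : Set Q))) ∧
      ρ = ⟨f, SP, (oneStep Γ' (Sum.inl f) (fun i => (SP i).1), P1 ∪ P2)⟩ }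

/-- The automaton `𝒟'(ℛ,𝒮)`: final states are the pairs `[S,P]` with
`S ∩ Q_f' ≠ ∅` and `P ⊆ Q_f`. -/
def DAutomatonRS {F : Type} {ar : F → ℕ} {Q : Type} (Rg : TRS (F ⊕ F) (arC ar))
    (Γ' : Set (TARule (F ⊕ F) (arC ar) Q)) (enc2 : Term (F ⊕ F) (arC ar) → Q)
    (Qf' Qf : Set Q) : TreeAutomaton F ar (Set Q × Set Q) where
  trans := DTransRS Rg Γ' enc2
  final := { SP | (SP.1 ∩ Qf').Nonempty ∧ SP.2 ⊆ Qf }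

section TermLemmas

namespace Term
variable {F : Type} {ar : F → ℕ}

lemma ground_app_iff {f : F} {ts : Fin (ar f) → Term F ar} :
    (app f ts).Ground ↔ ∀ i, (ts i).Ground := by
  simp only [Ground, vars]
  constructor
  · intro h i
    rw [Finset.eq_empty_iff_forall_notMem]
    intro n hn
    exact Finset.eq_empty_iff_forall_notMem.1 h n
      (Finset.mem_biUnion.2 ⟨i, Finset.mem_univ i, hn⟩)
  · intro h
    rw [Finset.eq_empty_iff_forall_notMem]
    intro n hn
    rcases Finset.mem_biUnion.1 hn with ⟨i, -, hi⟩
    exact Finset.eq_empty_iff_forall_notMem.1 (h i) n hi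

lemma not_ground_var (n : ℕ) : ¬ (var n : Term F ar).Ground := by
  simp [Ground, vars]

lemma mem_vars_iff_count_ne {n : ℕ} : ∀ {t : Term F ar}, n ∈ t.vars ↔ t.count n ≠ 0 := by
  intro t
  induction t with
  | var m =>
      simp only [vars, Finset.mem_singleton, count, ne_eq]
      rcases eq_or_ne m n with rfl | h
      · simp
      · simp [h, Ne.symm h]
  | app f ts ih =>
      simp only [vars, count, Finset.mem_biUnion, Finset.mem_univ, true_and]
      rw [ne_eq, Finset.sum_eq_zero_iff]
      push_neg
      exact exists_congr fun i => by rw [ih]; simp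

lemma linear_arg {f : F} {ts : Fin (ar f) → Term F ar}
    (h : (app f ts).Linear) (i : Fin (ar f)) : (ts i).Linear := by
  intro n
  refine le_trans ?_ (h n)
  simpa [count] using Finset.single_le_sum (f := fun j => (ts j).count n)
    (fun j _ => Nat.zero_le _) (Finset.mem_univ i)

lemma count_subtermAt_le {n : ℕ} :
    ∀ (p : List ℕ) (t u : Term F ar), t.subtermAt p = some u → u.count n ≤ t.count n := by
  intro p
  induction p with
  | nil =>
      intro t u h
      simp only [subtermAt, Option.some.injEq] at h
      subst h; exact le_rfl
  | cons i p ih =>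
      intro t u h
      cases t with
      | var m => exact absurd h (by simp [subtermAt])
      | app f ts =>
          simp only [subtermAt] at h
          split at h
          · refine le_trans (ih _ _ h) ?_
            simpa [count] using Finset.single_le_sum (f := fun j => (ts j).count n)
              (fun j _ => Nat.zero_le _) (Finset.mem_univ _)
          · exact absurd h (by simp)

lemma linear_subtermAt {p : List ℕ} {t u : Term F ar}
    (h : t.subtermAt p = some u) (hl : t.Linear) : u.Linear :=
  fun n => le_trans (count_subtermAt_le p t u h) (hl n)

lemma subtermAt_append : ∀ (p q : List ℕ) (t : Term F ar),
    t.subtermAt (p ++ q) = (t.subtermAt p).bind (fun w => w.subtermAt q) := by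
  intro p
  induction p with
  | nil => intro q t; simp [subtermAt]
  | cons i p ih =>
      intro q t
      cases t with
      | var m => simp [subtermAt]
      | app f ts =>
          simp only [List.cons_append, subtermAt]
          split
          · exact ih q _
          · simp

lemma ground_subtermAt : ∀ (p : List ℕ) (t u : Term F ar),
    t.subtermAt p = some u → t.Ground → u.Ground := by
  intro p
  induction p with
  | nil =>
      intro t u h ht
      simp only [subtermAt, Option.some.injEq] at h
      subst h; exact ht
  | cons i p ih =>
      intro t u h ht
      cases t with
      | var m => exact absurd h (by simp [subtermAt])
      | app f ts =>
          simp only [subtermAt] at h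
          split at h
          · exact ih _ _ h (ground_app_iff.1 ht _)
          · exact absurd h (by simp)

lemma ground_replaceAt : ∀ (p : List ℕ) (t w v : Term F ar),
    t.replaceAt p w = some v → t.Ground → w.Ground → v.Ground := by
  intro p
  induction p with
  | nil =>
      intro t w v h _ hw
      simp only [replaceAt, Option.some.injEq] at h
      subst h; exact hw
  | cons i p ih =>
      intro t w v h ht hw
      cases t with
      | var m => exact absurd h (by simp [replaceAt])
      | app f ts =>
          simp only [replaceAt] at h
          split at h
          · rcases Option.map_eq_some_iff.1 h with ⟨s', hs', rfl⟩
            rw [ground_app_iff]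
            intro j
            rcases eq_or_ne j ⟨i, by assumption⟩ with rfl | hj
            · rw [Function.update_self]
              exact ih _ _ _ hs' (ground_app_iff.1 ht _) hw
            · rw [Function.update_of_ne hj]
              exact ground_app_iff.1 ht _
          · exact absurd h (by simp)

lemma replaceAt_isSome : ∀ (p : List ℕ) (t u w : Term F ar),
    t.subtermAt p = some u → ∃ v, t.replaceAt p w = some v := by
  intro p
  induction p with
  | nil => intro t u w _; exact ⟨w, by simp [replaceAt]⟩
  | cons i p ih =>
      intro t u w h
      cases t with
      | var m => exact absurd h (by simp [subtermAt])
      | app f ts =>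
          simp only [subtermAt] at h
          split at h
          · rcases ih _ _ w h with ⟨v, hv⟩
            exact ⟨_, by simp only [replaceAt]; rw [dif_pos (by assumption), hv]; rfl⟩
          · exact absurd h (by simp)

lemma ground_subst {t : Term F ar} {σ : ℕ → Term F ar}
    (h : ∀ n ∈ t.vars, (σ n).Ground) : (t.subst σ).Ground := by
  induction t with
  | var n => exact h n (by simp [vars])
  | app f ts ih =>
      rw [subst, ground_app_iff]
      intro i
      exact ih i fun n hn => h n (by simp [vars]; exact ⟨i, hn⟩)

lemma ground_of_ground_subst {t : Term F ar} {σ : ℕ → Term F ar}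
    (h : (t.subst σ).Ground) : ∀ n ∈ t.vars, (σ n).Ground := by
  induction t with
  | var m => intro n hn; rw [vars, Finset.mem_singleton] at hn; subst hn; exact h
  | app f ts ih =>
      intro n hn
      simp only [vars, Finset.mem_biUnion, Finset.mem_univ, true_and] at hn
      rcases hn with ⟨i, hi⟩
      exact ih i (ground_app_iff.1 h i) n hi

lemma subst_congr {t : Term F ar} {σ σ' : ℕ → Term F ar}
    (h : ∀ n ∈ t.vars, σ n = σ' n) : t.subst σ = t.subst σ' := by
  induction t with
  | var n => exact h n (by simp [vars])
  | app f ts ih =>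
      rw [subst, subst]
      congr 1
      funext i
      exact ih i fun n hn => h n (by simp [vars]; exact ⟨i, hn⟩)

variable {G : Type} {arG : G → ℕ} {φ : F → G} {hφ : ∀ f, arG (φ f) = ar f}

lemma count_relabel {n : ℕ} : ∀ (t : Term F ar), (t.relabel φ hφ).count n = t.count n := by
  intro t
  induction t with
  | var m => rfl
  | app f ts ih =>
      simp only [relabel, count]
      exact Fintype.sum_equiv (finCongr (hφ f)) _ _ fun i => by
        rw [ih]; rfl

lemma mem_vars_relabel {n : ℕ} (t : Term F ar) :
    n ∈ (t.relabel φ hφ).vars ↔ n ∈ t.vars := by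
  rw [mem_vars_iff_count_ne, mem_vars_iff_count_ne, count_relabel]

lemma ground_relabel {t : Term F ar} (h : t.Ground) : (t.relabel φ hφ).Ground := by
  rw [Ground, Finset.eq_empty_iff_forall_notMem]
  intro n hn
  rw [mem_vars_relabel] at hn
  rw [Ground] at h
  simp [h] at hn

lemma linear_relabel {t : Term F ar} (h : t.Linear) : (t.relabel φ hφ).Linear := by
  intro n; rw [count_relabel]; exact h n

lemma subst_relabel (t : Term F ar) (σ : ℕ → Term F ar) :
    (t.subst σ).relabel φ hφ = (t.relabel φ hφ).subst (fun n => (σ n).relabel φ hφ) := by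
  induction t with
  | var n => rfl
  | app f ts ih =>
      simp only [subst, relabel]
      congr 1
      funext i
      exact ih _

end Term

lemma liftC_app {F : Type} {ar : F → ℕ} (f : F) (ts : Fin (ar f) → Term F ar) :
    liftC (Term.app f ts) = Term.app (Sum.inl f) (fun i => liftC (ts i)) := rfl

lemma liftC_subst {F : Type} {ar : F → ℕ} (t : Term F ar) (σ : ℕ → Term F ar) :
    liftC (t.subst σ) = (liftC t).subst (fun n => liftC (σ n)) :=
  Term.subst_relabel t σ

end TermLemmas

section AutomLemmas
variable {G : Type} {arG : G → ℕ} {Q : Type}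

lemma Reaches.mono {Δ Δ' : Set (TARule G arG Q)} (h : Δ ⊆ Δ') {t : Term G arG} {q : Q}
    (ht : Reaches Δ t q) : Reaches Δ' t q := by
  induction ht with
  | app hs hr ih => exact Reaches.app ih (h hr)

lemma reaches_app_iff {Δ : Set (TARule G arG Q)} {f : G} {ts : Fin (arG f) → Term G arG}
    {q : Q} :
    Reaches Δ (Term.app f ts) q ↔
      ∃ qs : Fin (arG f) → Q, (∀ i, Reaches Δ (ts i) (qs i)) ∧
        (⟨f, qs, q⟩ : TARule G arG Q) ∈ Δ := by
  constructor
  · intro h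
    cases h with
    | app hs hr => exact ⟨_, hs, hr⟩
  · rintro ⟨qs, hs, hr⟩
    exact Reaches.app hs hr

lemma tarule_fst {f g : G} {a : Fin (arG f) → Q} {b : Fin (arG g) → Q} {qa qb : Q}
    (h : (⟨f, a, qa⟩ : TARule G arG Q) = ⟨g, b, qb⟩) : f = g :=
  congrArg Sigma.fst h

lemma tarule_eq {f : G} {a b : Fin (arG f) → Q} {qa qb : Q}
    (h : (⟨f, a, qa⟩ : TARule G arG Q) = ⟨f, b, qb⟩) : a = b ∧ qa = qb := by
  injection h with h1 h2
  exact ⟨congrArg Prod.fst h2, congrArg Prod.snd h2⟩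

lemma reaches_encx {Δ : Set (TARule G arG Q)} {e : Term G arG → Q}
    (hB : BProp e ⊆ Δ) : ∀ {t : Term G arG}, t.Ground → Reaches Δ t (e (Term.var 0)) := by
  intro t
  induction t with
  | var n => intro h; exact absurd h (Term.not_ground_var n)
  | app f ts ih =>
      intro h
      exact Reaches.app (fun i => ih i (Term.ground_app_iff.1 h i)) (hB ⟨f, rfl⟩)

lemma SR_arg {Rg : TRS G arG} {f : G} {ts : Fin (arG f) → Term G arG}
    (h : Term.app f ts ∈ SR Rg) (i : Fin (arG f)) : ts i ∈ SR Rg := by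
  rcases h with ⟨lr, hlr, g, us, hg, j, p, hp⟩
  exact ⟨lr, hlr, g, us, hg, j, p ++ [i.1], by
    rw [Term.subtermAt_append, hp]
    simp [Term.subtermAt, i.isLt]⟩

lemma SR_lhs_arg {Rg : TRS G arG} {f : G} {ls : Fin (arG f) → Term G arG} {r : Term G arG}
    (h : (Term.app f ls, r) ∈ Rg.rules) (i : Fin (arG f)) : ls i ∈ SR Rg :=
  ⟨(Term.app f ls, r), h, f, ls, rfl, i, [], by simp [Term.subtermAt]⟩

lemma stPattern_mem_B {Rg : TRS G arG} {u : Term G arG} (h : u ∈ SR Rg) :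
    stPattern u ∈ BStateSet Rg :=
  Set.mem_union_left _ ⟨u, h, rfl⟩

lemma varz_mem_B {Rg : TRS G arG} : (Term.var 0 : Term G arG) ∈ BStateSet Rg :=
  Set.mem_union_right _ rfl

lemma reaches_pattern {Rg : TRS G arG} {Δ : Set (TARule G arG Q)}
    {e2 e : Term G arG → Q} (hM : BMatch Rg e2 ⊆ Δ) (hP : BProp e ⊆ Δ)
    (hx : e2 (Term.var 0) = e (Term.var 0)) :
    ∀ u, u ∈ SR Rg → ∀ σ : ℕ → Term G arG, (∀ n ∈ u.vars, (σ n).Ground) →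
      Reaches Δ (u.subst σ) (e2 (stPattern u)) := by
  intro u
  induction u with
  | var n =>
      intro _ σ hσ
      rw [stPattern, hx]
      exact reaches_encx hP (hσ n (by simp [Term.vars]))
  | app f ts ih =>
      intro hu σ hσ
      rw [stPattern, Term.subst]
      refine Reaches.app (qs := fun i => e2 (stPattern (ts i))) ?_ (hM ⟨f, ts, hu, rfl⟩)
      intro i
      exact ih i (SR_arg hu i) σ (fun n hn => hσ n (by
        simp only [Term.vars, Finset.mem_biUnion, Finset.mem_univ, true_and]
        exact ⟨i, hn⟩))

lemma SR_linear {Rg : TRS G arG} (hL : Rg.LeftLinear) {u : Term G arG}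
    (h : u ∈ SR Rg) : u.Linear := by
  rcases h with ⟨lr, hlr, f, ts, hf, i, p, hp⟩
  have h1 : lr.1.Linear := hL lr hlr
  rw [hf] at h1
  exact Term.linear_subtermAt hp (Term.linear_arg h1 i)

end AutomLemmas

section RelabelTRS
variable {F : Type} {ar : F → ℕ} {G : Type} {arG : G → ℕ}

lemma leftLinear_relabel {R : TRS F ar} {φ : F → G} {h : ∀ f, arG (φ f) = ar f}
    (hL : R.LeftLinear) : (R.relabel φ h).LeftLinear := by
  rintro lr ⟨lr0, h0, rfl⟩ n
  exact Term.linear_relabel (hL lr0 h0) n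

lemma growing_relabel {R : TRS F ar} {φ : F → G} {h : ∀ f, arG (φ f) = ar f}
    (hg : R.Growing) : (R.relabel φ h).Growing := by
  rintro lr ⟨lr0, h0, rfl⟩ n hn1 hn2 f ts hts i hni
  rcases lr0 with ⟨l0, r0⟩
  dsimp only at hn1 hn2 hts ⊢
  cases l0 with
  | var m =>
      rw [Term.relabel] at hts
      exact absurd hts (fun hh => nomatch hh)
  | app g us =>
      rw [Term.relabel] at hts
      injection hts with h1 h2
      subst h1
      have h2' := eq_of_heq h2
      subst h2'
      have hni' : n ∈ (us (Fin.cast (h g) i)).vars := (Term.mem_vars_relabel _).1 hni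
      have := hg (Term.app g us, r0) h0 n
        ((Term.mem_vars_relabel _).1 hn1) ((Term.mem_vars_relabel _).1 hn2)
        g us rfl (Fin.cast (h g) i) hni'
      show Term.relabel φ h (us (Fin.cast (h g) i)) = Term.var n
      rw [this]
      rfl
end RelabelTRS

section RewriteLemmas
variable {G : Type} {arG : G → ℕ}

@[simp] lemma stPattern_app {f : G} {ts : Fin (arG f) → Term G arG} :
    stPattern (Term.app f ts) = Term.app f ts := rfl

@[simp] lemma stPattern_var {n : ℕ} :
    stPattern (Term.var n : Term G arG) = Term.var 0 := rfl

lemma reachesT_subst {Q : Type} {Γ : Set (TARule G arG Q)} {θ : ℕ → Q}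
    {r : Term G arG} {q : Q} (h : ReachesT Γ θ r q) :
    ∀ σ : ℕ → Term G arG, (∀ n ∈ r.vars, Reaches Γ (σ n) (θ n)) →
      Reaches Γ (r.subst σ) q := by
  induction h with
  | var n => intro σ hσ; exact hσ n (by simp [Term.vars])
  | @app f ts qs q hs hr ih =>
      intro σ hσ
      rw [Term.subst]
      refine Reaches.app (fun i => ih i σ fun n hn => hσ n ?_) hr
      simp only [Term.vars, Finset.mem_biUnion, Finset.mem_univ, true_and]
      exact ⟨i, hn⟩

lemma reachesT_cases {Q : Type} {Γ : Set (TARule G arG Q)} {θ : ℕ → Q}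
    {r : Term G arG} {q : Q} (h : ReachesT Γ θ r q) :
    (∃ n, n ∈ r.vars ∧ q = θ n) ∨ (∃ ρ ∈ Γ, ρ.2.2 = q) := by
  cases h with
  | var n => exact Or.inl ⟨n, by simp [Term.vars], rfl⟩
  | app hs hr => exact Or.inr ⟨_, hr, rfl⟩

lemma rewrites_arg {Rl : Set (Term G arG × Term G arG)} {f : G}
    (vs : Fin (arG f) → Term G arG) (i : Fin (arG f)) {a b : Term G arG}
    (h : Rewrites Rl a b) (hv : vs i = a) :
    Rewrites Rl (Term.app f vs) (Term.app f (Function.update vs i b)) := by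
  rcases h with ⟨p, l, r, σ, hlr, hsub, hrep⟩
  refine ⟨i.1 :: p, l, r, σ, hlr, ?_, ?_⟩
  · simp only [Term.subtermAt]
    rw [dif_pos i.isLt, Fin.eta, hv]
    exact hsub
  · simp only [Term.replaceAt]
    rw [dif_pos i.isLt, Fin.eta, hv, hrep]
    rfl

lemma rewritesStar_arg {Rl : Set (Term G arG × Term G arG)} {f : G}
    (vs : Fin (arG f) → Term G arG) (i : Fin (arG f)) {a b : Term G arG}
    (h : RewritesStar Rl a b) (hv : vs i = a) :
    RewritesStar Rl (Term.app f vs) (Term.app f (Function.update vs i b)) := by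
  induction h with
  | refl =>
      rw [← hv, Function.update_eq_self]
  | tail _ hstep ih =>
      refine ih.tail ?_
      have := rewrites_arg (Function.update vs i _) i hstep (Function.update_self _ _ _)
      rwa [Function.update_idem] at this

lemma rewritesStar_args {Rl : Set (Term G arG × Term G arG)} {f : G}
    {vs ts : Fin (arG f) → Term G arG}
    (h : ∀ i, RewritesStar Rl (vs i) (ts i)) :
    RewritesStar Rl (Term.app f vs) (Term.app f ts) := by
  classical
  have key : ∀ s : Finset (Fin (arG f)),
      RewritesStar Rl (Term.app f vs)
        (Term.app f (fun i => if i ∈ s then ts i else vs i)) := by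
    intro s
    induction s using Finset.induction with
    | empty => exact Relation.ReflTransGen.refl
    | @insert j s hj ih =>
        have step := rewritesStar_arg (f := f)
          (fun i => if i ∈ s then ts i else vs i) j (h j) (by simp [hj])
        refine ih.trans ?_
        convert step using 2
        funext i
        by_cases hij : i = j
        · subst hij; simp [hj]
        · simp [Function.update_of_ne hij, hij]
  simpa using key Finset.univ

lemma linear_app_vars_unique {f : G} {us : Fin (arG f) → Term G arG}
    (h : (Term.app f us).Linear) {n : ℕ} {i j : Fin (arG f)}
    (hi : n ∈ (us i).vars) (hj : n ∈ (us j).vars) : i = j := by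
  by_contra hij
  have hpair : (us i).count n + (us j).count n
      = ∑ k ∈ ({i, j} : Finset (Fin (arG f))), (us k).count n :=
    (Finset.sum_pair (f := fun k => (us k).count n) hij).symm
  have hle : ∑ k ∈ ({i, j} : Finset (Fin (arG f))), (us k).count n
      ≤ ∑ k, (us k).count n :=
    Finset.sum_le_sum_of_subset (Finset.subset_univ _)
  have hcount := h n
  rw [Term.count] at hcount
  have hi' := Term.mem_vars_iff_count_ne.1 hi
  have hj' := Term.mem_vars_iff_count_ne.1 hj
  omega

end RewriteLemmas

lemma stPattern_arg_mem_B {G : Type} {arG : G → ℕ} {Rg : TRS G arG} {f : G}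
    {ts : Fin (arG f) → Term G arG} (h : Term.app f ts ∈ SR Rg) (i : Fin (arG f)) :
    stPattern (ts i) ∈ BStateSet Rg :=
  Set.mem_union_left _ ⟨ts i, SR_arg h i, rfl⟩

section CSetupLemmas
variable {G : Type} [Fintype G] {arG : G → ℕ} {Q : Type} [Fintype Q]
  {Rg : TRS G arG} {T : Set (Term G arG)} (C : CSetup Q Rg T)

lemma btrans_states {ρ : TARule G arG Q} (h : ρ ∈ BTrans Rg C.enc) :
    ρ.2.2 ∈ C.enc '' BStateSet Rg ∧ ∀ i, ρ.2.1 i ∈ C.enc '' BStateSet Rg := by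
  rcases h with ⟨f, ts, hSR, rfl⟩ | ⟨f, rfl⟩
  · exact ⟨⟨Term.app f ts, stPattern_mem_B hSR, rfl⟩,
      fun i => ⟨stPattern (ts i), stPattern_arg_mem_B hSR i, rfl⟩⟩
  · exact ⟨⟨_, varz_mem_B, rfl⟩, fun i => ⟨_, varz_mem_B, rfl⟩⟩

lemma gamma0_states {ρ : TARule G arG Q} (h : ρ ∈ C.Γ0) :
    ρ.2.2 ∈ C.Qstates ∧ ∀ i, ρ.2.1 i ∈ C.Qstates := by
  rcases h with hA | hB
  · exact ⟨Set.mem_union_left _ (C.hAstates ρ hA).1,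
      fun i => Set.mem_union_left _ ((C.hAstates ρ hA).2 i)⟩
  · exact ⟨Set.mem_union_right _ (btrans_states C hB).1,
      fun i => Set.mem_union_right _ ((btrans_states C hB).2 i)⟩

lemma satIter_states : ∀ n, ∀ ρ ∈ (satStep Rg C.enc C.Qstates)^[n] C.Γ0,
    ρ.2.2 ∈ C.Qstates ∧ ∀ i, ρ.2.1 i ∈ C.Qstates := by
  intro n
  induction n with
  | zero => exact fun ρ h => gamma0_states C h
  | succ n ih =>
      intro ρ h
      rw [Function.iterate_succ_apply'] at h
      rcases h with h | ⟨f, ls, r, θ, q, hrule, hθ, hT, rfl⟩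
      · exact ih ρ h
      · constructor
        · rcases reachesT_cases hT with ⟨m, hm, rfl⟩ | ⟨ρ', hρ', hq⟩
          · exact hθ m hm
          · exact hq ▸ (ih ρ' hρ').1
        · intro i
          show satArg C.enc θ r.vars (ls i) ∈ C.Qstates
          cases hls : ls i with
          | var m =>
              rw [satArg]
              split_ifs with hm
              · exact hθ m hm
              · exact Set.mem_union_right _ ⟨_, varz_mem_B, rfl⟩
          | app g us =>
              rw [satArg]
              refine Set.mem_union_right _ ⟨Term.app g us, ?_, rfl⟩
              rw [← stPattern_app]
              exact stPattern_mem_B (hls ▸ SR_lhs_arg hrule i)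

lemma gamma0_subset_iter : ∀ n, C.Γ0 ⊆ (satStep Rg C.enc C.Qstates)^[n] C.Γ0 := by
  intro n
  induction n with
  | zero => exact fun _ h => h
  | succ n ih =>
      rw [Function.iterate_succ_apply']
      exact fun ρ h => Set.mem_union_left _ (ih h)

lemma gamma0_purify : ∀ {t : Term G arG} {q : Q}, Reaches C.Γ0 t q →
    (q ∈ C.QA → Reaches C.A.trans t q) ∧
    (q ∈ C.enc '' BStateSet Rg → Reaches (BTrans Rg C.enc) t q) := by
  intro t q h
  induction h with
  | @app f ts qs q hs hr ih =>
      rcases hr with hA | hB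
      · have hQ := C.hAstates _ hA
        have hAr : Reaches C.A.trans (Term.app f ts) q :=
          Reaches.app (fun i => (ih i).1 (hQ.2 i)) hA
        exact ⟨fun _ => hAr, fun hq => (C.hshared q ⟨hQ.1, hq⟩ _).1 hAr⟩
      · have hQ := btrans_states C hB
        have hBr : Reaches (BTrans Rg C.enc) (Term.app f ts) q :=
          Reaches.app (fun i => (ih i).2 (hQ.2 i)) hB
        exact ⟨fun hqA => (C.hshared q ⟨hqA, hQ.1⟩ _).2 hBr, fun _ => hBr⟩

lemma reaches_B_pattern_inv (hL : Rg.LeftLinear) {g0 : Term G arG} (hg0 : g0.Ground) :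
    ∀ u, u ∈ SR Rg → ∀ t : Term G arG, t.Ground →
      Reaches (BTrans Rg C.enc) t (C.enc (stPattern u)) →
      ∃ σ : ℕ → Term G arG, t = u.subst σ ∧ ∀ n, (σ n).Ground := by
  classical
  intro u
  induction u with
  | var n => intro _ t ht _; exact ⟨fun _ => t, rfl, fun _ => ht⟩
  | app f us ih =>
      intro hu t ht hr
      rw [stPattern_app] at hr
      cases hr with
      | @app g ts qs q hs hrule =>
          rcases hrule with ⟨f', ts', hSR, hrule⟩ | ⟨f', hrule⟩
          · have hfg := tarule_fst hrule
            subst hfg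
            obtain ⟨hqs, hq⟩ := tarule_eq hrule
            have happ : (Term.app f us : Term G arG) = Term.app g ts' :=
              C.henc (stPattern_mem_B hu) (stPattern_mem_B hSR) hq
            injection happ with h1 h2
            subst h1
            have h2' := eq_of_heq h2
            subst h2'
            have H : ∀ i, ∃ σ : ℕ → Term G arG,
                ts i = (us i).subst σ ∧ ∀ n, (σ n).Ground := by
              intro i
              refine ih i (SR_arg hu i) (ts i) (Term.ground_app_iff.1 ht i) ?_
              have h5 := hs i
              rw [hqs] at h5
              exact h5
            choose σs h1 h2 using H
            have hlin : (Term.app f us).Linear := SR_linear hL hu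
            refine ⟨fun n => if h : ∃ i, n ∈ (us i).vars then σs h.choose n else g0, ?_, ?_⟩
            · rw [Term.subst]
              congr 1
              funext i
              rw [h1 i]
              refine Term.subst_congr fun n hn => ?_
              have hex : ∃ j, n ∈ (us j).vars := ⟨i, hn⟩
              rw [dif_pos hex]
              have hch : hex.choose = i := linear_app_vars_unique hlin hex.choose_spec hn
              rw [hch]
            · intro n
              dsimp only
              split
              · exact h2 _ n
              · exact hg0
          · have hfg := tarule_fst hrule
            subst hfg
            obtain ⟨-, hq⟩ := tarule_eq hrule
            have := C.henc (stPattern_mem_B hu) varz_mem_B hq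
            exact absurd this (fun hh => nomatch hh)

lemma qstates_accessible {q : Q} (hq : q ∈ C.Qstates) :
    ∃ t : Term G arG, t.Ground ∧ Reaches C.Γ0 t q := by
  rcases hq with hA | ⟨u, hu, rfl⟩
  · rcases C.hacc q hA with ⟨t, ht, hr⟩
    exact ⟨t, ht, hr.mono Set.subset_union_left⟩
  · rcases C.hground with ⟨g0, hg0⟩
    rcases hu with ⟨w, hw, rfl⟩ | hvz
    · refine ⟨w.subst (fun _ => g0), Term.ground_subst (fun _ _ => hg0), ?_⟩
      exact reaches_pattern
        (fun ρ h => Set.mem_union_right _ (Set.mem_union_left _ h))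
        (fun ρ h => Set.mem_union_right _ (Set.mem_union_right _ h))
        rfl w hw (fun _ => g0) (fun _ _ => hg0)
    · rw [Set.mem_singleton_iff] at hvz
      subst hvz
      exact ⟨g0, hg0, reaches_encx
        (fun ρ h => Set.mem_union_right _ (Set.mem_union_right _ h)) hg0⟩

end CSetupLemmas

section Soundness
variable {G : Type} [Fintype G] {arG : G → ℕ} {Q : Type} [Fintype Q]
  {Rg : TRS G arG} {T : Set (Term G arG)} (C : CSetup Q Rg T)

lemma sat_sound_step (hL : Rg.LeftLinear) (hGrow : Rg.Growing)
    (Γn : Set (TARule G arG Q))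
    (hΓ0 : C.Γ0 ⊆ Γn)
    (hsound : ∀ v q, v.Ground → Reaches Γn v q →
        ∃ t, t.Ground ∧ RewritesStar Rg.rules v t ∧ Reaches C.Γ0 t q) :
    ∀ v q, Reaches (satStep Rg C.enc C.Qstates Γn) v q → v.Ground →
      ∃ t, t.Ground ∧ RewritesStar Rg.rules v t ∧ Reaches C.Γ0 t q := by
  classical
  intro v q h
  induction h with
  | @app f vs qs q hs hrule ih =>
      intro hv
      obtain ⟨g0, hg0⟩ := C.hground
      rcases hrule with hold | ⟨f', ls, r, θ, q', hR, hθ, hT, hrule⟩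
      · -- rule already in Γn
        have hargs := fun i => ih i (Term.ground_app_iff.1 hv i)
        choose ts h1 h2 h3 using hargs
        have hw : Reaches Γn (Term.app f ts) q :=
          Reaches.app (fun i => (h3 i).mono hΓ0) hold
        obtain ⟨t, ht, hst, hr0⟩ := hsound _ q (Term.ground_app_iff.2 h1) hw
        exact ⟨t, ht, (rewritesStar_args h2).trans hst, hr0⟩
      · -- new (saturation) rule
        have hfg := tarule_fst hrule
        subst hfg
        obtain ⟨hqs, hq⟩ := tarule_eq hrule
        subst hq
        have hargs := fun i => ih i (Term.ground_app_iff.1 hv i)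
        choose ts h1 h2 h3 using hargs
        -- h3 i : Reaches C.Γ0 (ts i) (qs i)
        have KEY : ∀ i,
            ((∀ m, ls i ≠ Term.var m) →
              ∃ σ : ℕ → Term G arG, ts i = (ls i).subst σ ∧ ∀ n, (σ n).Ground) ∧
            (∀ m, ls i = Term.var m → m ∈ r.vars → Reaches Γn (ts i) (θ m)) := by
          intro i
          have hqsi : qs i = satArg C.enc θ r.vars (ls i) := congrFun hqs i
          cases hls : ls i with
          | var m =>
              refine ⟨fun hno => absurd rfl (hno m), fun m' hm' hmr => ?_⟩
              injection hm' with hmm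
              subst hmm
              have hqθ : qs i = θ m := by
                rw [hqsi, hls, satArg, if_pos hmr]
              exact (hqθ ▸ h3 i).mono hΓ0
          | app g us =>
              refine ⟨fun _ => ?_, fun m hm _ => nomatch hm⟩
              have hqse : qs i = C.enc (Term.app g us) := by rw [hqsi, hls, satArg]
              have h3' : Reaches C.Γ0 (ts i) (C.enc (Term.app g us)) := hqse ▸ h3 i
              have hmem : Term.app g us ∈ SR Rg := hls ▸ SR_lhs_arg hR i
              have hB : Reaches (BTrans Rg C.enc) (ts i) (C.enc (Term.app g us)) := by
                refine (gamma0_purify C h3').2 ⟨Term.app g us, ?_, rfl⟩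
                rw [← stPattern_app]
                exact stPattern_mem_B hmem
              obtain ⟨σi, hwi, hgi⟩ :=
                reaches_B_pattern_inv C hL hg0 (Term.app g us) hmem (ts i) (h1 i) hB
              exact ⟨σi, hwi, hgi⟩
        -- accessibility witnesses for fresh variables of r
        have ACC : ∀ m, m ∈ r.vars → ∃ a : Term G arG, a.Ground ∧ Reaches Γn a (θ m) := by
          intro m hm
          obtain ⟨a, ha, hra⟩ := qstates_accessible C (hθ m hm)
          exact ⟨a, ha, hra.mono hΓ0⟩
        haveI : Nonempty (Term G arG) := ⟨g0⟩
        choose! acc hacc1 hacc2 using ACC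
        have SIG : ∀ i, ∃ σ : ℕ → Term G arG,
            (∀ m, ls i ≠ Term.var m) → ts i = (ls i).subst σ ∧ ∀ n, (σ n).Ground := by
          intro i
          by_cases hvar : ∀ m, ls i ≠ Term.var m
          · obtain ⟨σ, hσ⟩ := (KEY i).1 hvar
            exact ⟨σ, fun _ => hσ⟩
          · exact ⟨fun _ => g0, fun hh => absurd hh hvar⟩
        choose σs hσs using SIG
        have hlhslin : (Term.app f ls).Linear := hL (Term.app f ls, r) hR
        set σ : ℕ → Term G arG := fun m =>
          if hvm : ∃ i, ls i = Term.var m then ts hvm.choose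
          else if h2m : ∃ i, m ∈ (ls i).vars then σs h2m.choose m
          else if m ∈ r.vars then acc m else g0 with hσdef
        -- each branch facts
        have hvarmem : ∀ (i : Fin (arG f)) m, ls i = Term.var m → m ∈ (ls i).vars := by
          intro i m h
          rw [h, Term.vars]
          exact Finset.mem_singleton_self m
        have hmatch : ∀ i, ts i = (ls i).subst σ := by
          intro i
          cases hls : ls i with
          | var m =>
              have hvm : ∃ j, ls j = Term.var m := ⟨i, hls⟩
              have hch : hvm.choose = i := by
                refine linear_app_vars_unique hlhslin (hvarmem _ m hvm.choose_spec) (hvarmem i m hls)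
              show ts i = σ m
              rw [hσdef]
              dsimp only
              rw [dif_pos hvm, hch]
          | app g us =>
              have hnv : ∀ m, ls i ≠ Term.var m := by
                rw [hls]; exact fun m hh => nomatch hh
              obtain ⟨heq, hgr⟩ := hσs i hnv
              rw [← hls, heq]
              refine Term.subst_congr fun m hm => ?_
              have h2m : ∃ j, m ∈ (ls j).vars := ⟨i, hm⟩
              have hnvm : ¬ ∃ j, ls j = Term.var m := by
                rintro ⟨j, hj⟩
                have : j = i := linear_app_vars_unique hlhslin (hvarmem j m hj) hm
                rw [this] at hj
                exact hnv m hj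
              have hch : h2m.choose = i := linear_app_vars_unique hlhslin h2m.choose_spec hm
              rw [hσdef]
              dsimp only
              rw [dif_neg hnvm, dif_pos h2m, hch]
        have hnovar_of_mem : ∀ (j : Fin (arG f)) m, ¬ (∃ i, ls i = Term.var m) →
            m ∈ (ls j).vars → ∀ m', ls j ≠ Term.var m' := by
          intro j m hnvm hmj m' hj
          rw [hj, Term.vars, Finset.mem_singleton] at hmj
          subst hmj
          exact hnvm ⟨j, hj⟩
        have hσground : ∀ m, (σ m).Ground := by
          intro m
          rw [hσdef]
          dsimp only
          by_cases hvm : ∃ i, ls i = Term.var m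
          · rw [dif_pos hvm]; exact h1 _
          · rw [dif_neg hvm]
            by_cases h2m : ∃ i, m ∈ (ls i).vars
            · rw [dif_pos h2m]
              exact (hσs h2m.choose (hnovar_of_mem _ m hvm h2m.choose_spec)).2 m
            · rw [dif_neg h2m]
              by_cases hmr : m ∈ r.vars
              · rw [if_pos hmr]; exact hacc1 m hmr
              · rw [if_neg hmr]; exact hg0
        have hreachσ : ∀ m ∈ r.vars, Reaches Γn (σ m) (θ m) := by
          intro m hm
          by_cases hvm : ∃ i, ls i = Term.var m
          · rw [hσdef]
            dsimp only
            rw [dif_pos hvm]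
            exact (KEY hvm.choose).2 m hvm.choose_spec hm
          · have h2m : ¬ ∃ i, m ∈ (ls i).vars := by
              rintro ⟨j, hj⟩
              have hmem1 : m ∈ (Term.app f ls).vars := by
                simp only [Term.vars, Finset.mem_biUnion, Finset.mem_univ, true_and]
                exact ⟨j, hj⟩
              exact hvm ⟨j, hGrow (Term.app f ls, r) hR m hmem1 hm f ls rfl j hj⟩
            rw [hσdef]
            dsimp only
            rw [dif_neg hvm, dif_neg h2m, if_pos hm]
            exact hacc2 m hm
        -- the root rewrite step
        have hstep : Rewrites Rg.rules (Term.app f ts) (r.subst σ) := by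
          refine ⟨[], Term.app f ls, r, σ, hR, ?_, ?_⟩
          · show some (Term.app f ts) = some ((Term.app f ls).subst σ)
            have hts : ts = fun i => (ls i).subst σ := funext hmatch
            rw [Term.subst, ← hts]
          · rfl
        have hrground : (r.subst σ).Ground :=
          Term.ground_subst (fun m _ => hσground m)
        have hreach : Reaches Γn (r.subst σ) q := reachesT_subst hT σ hreachσ
        obtain ⟨t, ht, hst, hr0⟩ := hsound _ q hrground hreach
        refine ⟨t, ht, ?_, hr0⟩
        exact ((rewritesStar_args h2).tail hstep).trans hst

lemma sat_sound (hL : Rg.LeftLinear) (hGrow : Rg.Growing) :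
    ∀ n, ∀ v q, v.Ground → Reaches ((satStep Rg C.enc C.Qstates)^[n] C.Γ0) v q →
      ∃ t, t.Ground ∧ RewritesStar Rg.rules v t ∧ Reaches C.Γ0 t q := by
  intro n
  induction n with
  | zero => exact fun v q hv h => ⟨v, hv, Relation.ReflTransGen.refl, h⟩
  | succ n ih =>
      intro v q hv h
      rw [Function.iterate_succ_apply'] at h
      exact sat_sound_step C hL hGrow _ (gamma0_subset_iter C n)
        (fun v q hg hr => ih v q hg hr) v q h hv

lemma satGamma_sound (hL : Rg.LeftLinear) (hGrow : Rg.Growing)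
    {v : Term G arG} {q : Q} (hv : v.Ground) (h : Reaches C.Γsat v q) :
    ∃ t, t.Ground ∧ RewritesStar Rg.rules v t ∧ Reaches C.Γ0 t q := by
  -- a reachability derivation uses finitely many rules, but the iterates form a chain
  have hchain : ∀ m n, m ≤ n →
      (satStep Rg C.enc C.Qstates)^[m] C.Γ0 ⊆ (satStep Rg C.enc C.Qstates)^[n] C.Γ0 := by
    intro m n hmn
    induction hmn with
    | refl => exact fun _ h => h
    | step _ ih =>
        refine fun ρ hρ => ?_
        rw [Function.iterate_succ_apply']
        exact Set.mem_union_left _ (ih hρ)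
  have key : ∀ {t : Term G arG} {q : Q}, Reaches C.Γsat t q →
      ∃ n, Reaches ((satStep Rg C.enc C.Qstates)^[n] C.Γ0) t q := by
    intro t q h
    induction h with
    | @app f ts qs q hs hr ih =>
        rcases Set.mem_iUnion.1 hr with ⟨n0, hn0⟩
        choose ns hns using ih
        obtain ⟨N, hN⟩ : ∃ N, n0 ≤ N ∧ ∀ i, ns i ≤ N := by
          rcases isEmpty_or_nonempty (Fin (arG f)) with hemp | hne
          · exact ⟨n0, le_rfl, fun i => (hemp.false i).elim⟩
          · refine ⟨max n0 (Finset.univ.sup ns), le_max_left _ _, fun i => ?_⟩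
            exact le_trans (Finset.le_sup (Finset.mem_univ i)) (le_max_right _ _)
        exact ⟨N, Reaches.app (fun i => (hns i).mono (hchain _ _ (hN.2 i)))
          (hchain _ _ hN.1 hn0)⟩
  obtain ⟨n, hn⟩ := key h
  exact sat_sound C hL hGrow n v q hv hn

end Soundness

lemma gammasat_states {G : Type} [Fintype G] {arG : G → ℕ} {Q : Type} [Fintype Q]
    {Rg : TRS G arG} {T : Set (Term G arG)} (C : CSetup Q Rg T)
    {ρ : TARule G arG Q} (h : ρ ∈ C.Γsat) :
    ρ.2.2 ∈ C.Qstates ∧ ∀ i, ρ.2.1 i ∈ C.Qstates := by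
  rcases Set.mem_iUnion.1 h with ⟨n, hn⟩
  exact satIter_states C n ρ hn

lemma ground_circTm {F : Type} {ar : F → ℕ} {u : Term F ar} (h : u.Ground) :
    (circTm u).Ground := by
  cases u with
  | var n => exact absurd h (Term.not_ground_var n)
  | app f ts =>
      rw [show circTm (Term.app f ts) = Term.app (Sum.inr f) (fun i => liftC (ts i)) from rfl,
        Term.ground_app_iff]
      exact fun i => Term.ground_relabel (Term.ground_app_iff.1 h i)

section Final
variable {F : Type} [Fintype F] {ar : F → ℕ} {Q : Type} [Fintype Q]
  {R S : TRS F ar} (C : CrsSetup Q R S)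

lemma bprop_subset_gammaP : BProp C.enc ⊆ C.Γ' :=
  fun ρ h => Set.mem_union_left _ (Set.mem_union_left _
    (Set.mem_iUnion.2 ⟨0, Set.mem_union_right _ (Set.mem_union_right _ h)⟩))

lemma bmatch2_subset_gammaP : BMatch R.liftC C.enc2 ⊆ C.Γ' :=
  fun ρ h => Set.mem_union_left _ (Set.mem_union_right _ h)

lemma gammaP_prune : ∀ {t : Term (F ⊕ F) (arC ar)} {q : Q}, Reaches C.Γ' t q →
    q ∈ C.toCSetup.Qstates → Reaches C.toCSetup.Γsat t q := by
  intro t q h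
  induction h with
  | @app f ts qs q hs hr ih =>
      intro hq
      rcases hr with (hsat | hBM) | hE
      · have hst := gammasat_states C.toCSetup hsat
        exact Reaches.app (fun i => ih i (hst.2 i)) hsat
      · exfalso
        obtain ⟨g, ws, hSR, heq⟩ := hBM
        have hfg := tarule_fst heq
        subst hfg
        obtain ⟨-, hqe⟩ := tarule_eq heq
        refine Set.eq_empty_iff_forall_notMem.1 C.hfresh2 q ⟨⟨Term.app f ws, ⟨?_, ?_⟩, hqe.symm⟩, hq⟩
        · rw [← stPattern_app]
          exact stPattern_mem_B hSR
        · exact fun hh => nomatch hh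
      · exfalso
        have hqE : q ∈ statesOf C.Etrans := ⟨_, hE, Or.inl rfl⟩
        exact Set.eq_empty_iff_forall_notMem.1 C.hEfresh q ⟨hqE, Set.mem_union_left _ hq⟩

lemma gammaP_accept (hRlin : R.IsLinear) (hRgrow : R.Growing)
    {v : Term (F ⊕ F) (arC ar)} {q : Q} (hv : v.Ground)
    (hq : q ∈ C.A.final) (h : Reaches C.Γ' v q) :
    ∃ t ∈ TRS.RSset S.circ, RewritesStar R.liftC.rules v t := by
  have hQA : q ∈ C.QA := C.hfinal hq
  have h1 := gammaP_prune C h (Set.mem_union_left _ hQA)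
  obtain ⟨t, ht, hst, h0⟩ := satGamma_sound C.toCSetup
    (leftLinear_relabel hRlin.1) (growing_relabel hRgrow) hv h1
  have hA := (gamma0_purify C.toCSetup h0).1 hQA
  refine ⟨t, ?_, hst⟩
  rw [C.hT]
  exact ⟨ht, q, hq, hA⟩

lemma dmain :
    ∀ {s : Term F ar} {SP : Set Q × Set Q},
      Reaches (DTransRS R.liftC C.Γ' C.enc2) s SP → s.Ground →
      (SP.1 = dn C.Γ' (liftC s)) ∧
      (∀ p u, s.subtermAt p = some u → R.IsRedex u →
        ∃ v, (liftC s).replaceAt p (circTm u) = some v ∧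
          ∃ q ∈ SP.2, Reaches C.Γ' v q) := by
  intro s SP h
  induction h with
  | @app f ss SPs SP hs hrule ih =>
      intro hg
      obtain ⟨f', SP', P1, P2, hP1, hcover, hdisj, hrule⟩ := hrule
      have hff := tarule_fst hrule
      subst hff
      obtain ⟨hSPs, hSP⟩ := tarule_eq hrule
      subst hSP
      subst hSPs
      have hdn : ∀ i, (SPs i).1 = dn C.Γ' (liftC (ss i)) :=
        fun i => (ih i (Term.ground_app_iff.1 hg i)).1
      have part1 : oneStep C.Γ' (Sum.inl f) (fun i => (SPs i).1)
          = dn C.Γ' (liftC (Term.app f ss)) := by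
        ext q
        constructor
        · rintro ⟨qs, hqs, hr2⟩
          show Reaches C.Γ' (liftC (Term.app f ss)) q
          rw [liftC_app]
          refine Reaches.app (fun i => ?_) hr2
          have h5 : qs i ∈ (SPs i).1 := hqs i
          rw [hdn i] at h5
          exact h5
        · intro hq
          have hq' : Reaches C.Γ' (Term.app (Sum.inl f) (fun i => liftC (ss i))) q := hq
          cases hq' with
          | @app g ts qs q hs2 hr2 =>
              refine ⟨qs, fun i => ?_, hr2⟩
              show qs i ∈ (SPs i).1
              rw [hdn i]
              exact hs2 i
      refine ⟨part1, ?_⟩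
      intro p u hpu hured
      cases p with
      | nil =>
          simp only [Term.subtermAt, Option.some.injEq] at hpu
          subst hpu
          obtain ⟨lr, hlr, σ₀, hsub⟩ := hured
          cases hl : lr.1 with
          | var m => exact absurd hl (R.lhs_not_var lr hlr m)
          | app g ls₀ =>
              rw [hl, Term.subst] at hsub
              injection hsub with hfg hss
              subst hfg
              have hss' := eq_of_heq hss
              have hrule' : (Term.app (Sum.inl f) (fun i => liftC (ls₀ i)), liftC lr.2)
                  ∈ R.liftC.rules := by
                have hmem : (liftC lr.1, liftC lr.2) ∈ R.liftC.rules := ⟨lr, hlr, rfl⟩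
                rw [hl] at hmem
                exact hmem
              have hLM : LhsMatch R.liftC C.enc2 (Sum.inl f) (fun i => (SPs i).1) := by
                refine ⟨fun i => liftC (ls₀ i), liftC lr.2, hrule', ?_⟩
                intro i
                show C.enc2 (stPattern (liftC (ls₀ i))) ∈ (SPs i).1
                rw [hdn i]
                show Reaches C.Γ' (liftC (ss i)) (C.enc2 (stPattern (liftC (ls₀ i))))
                have hssi : ss i = (ls₀ i).subst σ₀ := congrFun hss' i
                have hgi : (ss i).Ground := Term.ground_app_iff.1 hg i
                have hmem2 : liftC (ls₀ i) ∈ SR R.liftC := SR_lhs_arg hrule' i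
                have h6 := reaches_pattern (bmatch2_subset_gammaP C) (bprop_subset_gammaP C)
                  C.hx (liftC (ls₀ i)) hmem2 (fun n => liftC (σ₀ n))
                  (fun n hn => Term.ground_relabel
                    (Term.ground_of_ground_subst (hssi ▸ hgi) n ((Term.mem_vars_relabel _).1 hn)))
                rw [← liftC_subst, ← hssi] at h6
                exact h6
              rcases hdisj with ⟨-, hP2ne, hP2sub⟩ | ⟨hnLM, -⟩
              · obtain ⟨q, hq⟩ := hP2ne
                obtain ⟨qs, hqs, hr2⟩ := hP2sub hq
                refine ⟨circTm (Term.app f ss), by simp [Term.replaceAt], q,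
                  Set.mem_union_right _ hq, ?_⟩
                show Reaches C.Γ' (Term.app (Sum.inr f) (fun i => liftC (ss i))) q
                refine Reaches.app (fun i => ?_) hr2
                have h5 : qs i ∈ (SPs i).1 := hqs i
                rw [hdn i] at h5
                exact h5
              · exact absurd hLM hnLM
      | cons i0 p' =>
          simp only [Term.subtermAt] at hpu
          split at hpu
          case isTrue hlt =>
            obtain ⟨-, ihp⟩ := ih ⟨i0, hlt⟩ (Term.ground_app_iff.1 hg ⟨i0, hlt⟩)
            obtain ⟨vi, hvi, q', hq', hrv⟩ := ihp p' u hpu hured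
            obtain ⟨q, hqP1, qs, hqs, hr2⟩ := hcover ⟨i0, hlt⟩ q' hq'
            refine ⟨Term.app (Sum.inl f)
              (Function.update (fun j => liftC (ss j)) ⟨i0, hlt⟩ vi), ?_,
              q, Set.mem_union_left _ hqP1, ?_⟩
            · rw [liftC_app]
              simp only [Term.replaceAt]
              have hlt' : i0 < arC ar (Sum.inl f) := hlt
              rw [dif_pos hlt']
              have hfe : ((fun j => liftC (ss j)) (⟨i0, hlt'⟩ : Fin (arC ar (Sum.inl f)))).replaceAt p' (circTm u)
                  = some vi := hvi
              rw [hfe]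
              rfl
            · refine Reaches.app (fun j => ?_) hr2
              by_cases hji : j = ⟨i0, hlt⟩
              · subst hji
                rw [Function.update_self]
                have h5 : qs ⟨i0, hlt⟩ ∈ (if (⟨i0, hlt⟩ : Fin (ar f)) = ⟨i0, hlt⟩
                    then ({q'} : Set Q) else (SPs ⟨i0, hlt⟩).1) := hqs ⟨i0, hlt⟩
                rw [if_pos rfl, Set.mem_singleton_iff] at h5
                rw [h5]
                exact hrv
              · rw [Function.update_of_ne hji]
                have h5 : qs j ∈ (if j = ⟨i0, hlt⟩ then ({q'} : Set Q)
                    else (SPs j).1) := hqs j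
                rw [if_neg hji, hdn j] at h5
                exact h5
          case isFalse hlt => exact absurd hpu (by simp)

end Final

/-- Let `ℛ` and `𝒮` be linear growing TRSs over `𝓕` and `𝒟'(ℛ,𝒮)`
the powerset-pair automaton built from `𝒞'_{RS_{𝒮°}}(ℛ)`.  If `s →_{Γ_{𝒟'}}* [S,P]`
with `P ⊆ Q_f`, then for every redex position `p` of `s`, `s[(s|_p)°]_p` rewrites in
`ℛ` to a root-stable term of `𝒮°`. -/
theorem statement17 {F : Type} [Fintype F] {ar : F → ℕ} {Q : Type} [Fintype Q]
    (R S : TRS F ar) (hRlin : R.IsLinear) (hRgrow : R.Growing)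
    (hSlin : S.IsLinear) (hSgrow : S.Growing)
    (C : CrsSetup Q R S)
    (s : Term F ar) (hs : s.Ground) (Sst P : Set Q)
    (h : Reaches (DTransRS R.liftC C.Γ' C.enc2) s (Sst, P))
    (hPf : P ⊆ C.A.final)
    (p : List ℕ) (u : Term F ar) (hpu : s.subtermAt p = some u) (hu : R.IsRedex u) :
    ∃ v, (liftC s).replaceAt p (circTm u) = some v ∧
      ∃ t ∈ TRS.RSset S.circ, RewritesStar R.liftC.rules v t := by
  obtain ⟨-, part2⟩ := dmain C h hs
  obtain ⟨v, hrep, q, hqP, hreach⟩ := part2 p u hpu hu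
  have hvg : v.Ground := Term.ground_replaceAt p (liftC s) (circTm u) v hrep
    (Term.ground_relabel hs) (ground_circTm (Term.ground_subtermAt p s u hpu hs))
  obtain ⟨t, htmem, hstar⟩ := gammaP_accept C hRlin hRgrow hvg (hPf hqP) hreach
  exact ⟨v, hrep, t, htmem, hstar⟩
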